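/- For every r-multipartition λ of n and every k, the number s_k(λ) of row-semistandard x_k-tableaux of shape λ satisfies s_k(λ) = Σ_{j=0}^{k} C(n+j, j) · m_{k-j}(λ), where m_i(λ) is the number of standard λ-tableaux with exactly i descents. -/

import Mathlib

/-- An `r`-multipartition of `n`: an `r`-tuple of partitions
`(λ⁽⁰⁾; …; λ⁽ʳ⁻¹⁾)` with `|λ⁽⁰⁾| + ⋯ + |λ⁽ʳ⁻¹⁾| = n`.  `part c a` is the
length of row `a` (`0`-indexed) of the `c`-th component. -/
structure MultiPartition (r n : ℕ) where
  part : Fin r → ℕ → ℕ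
  antitone : ∀ c a, part c (a + 1) ≤ part c a
  vanish : ∀ c a, n ≤ a → part c a = 0
  size : (∑ c : Fin r, ∑ a ∈ Finset.range n, part c a) = n

/-- The boxes of (the Young diagram of) an `r`-multipartition:
triples (component, row, column), `0`-indexed. -/
def MultiPartition.Box {r n : ℕ} (Λ : MultiPartition r n) : Type :=
  {x : Fin r × ℕ × ℕ // x.2.2 < Λ.part x.1 x.2.1}

/-- A standard `Λ`-tableau: a bijective filling of the boxes of `Λ` by the
entries `1, …, n` (here `Fin n`), strictly increasing along rows and down
columns within each component. -/
structure StdTableau {r n : ℕ} (Λ : MultiPartition r n) where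
  entry : Λ.Box → Fin n
  bijective : Function.Bijective entry
  row_lt : ∀ x y : Λ.Box, x.1.1 = y.1.1 → x.1.2.1 = y.1.2.1 → x.1.2.2 < y.1.2.2 →
    entry x < entry y
  col_lt : ∀ x y : Λ.Box, x.1.1 = y.1.1 → x.1.2.2 = y.1.2.2 → x.1.2.1 < y.1.2.1 →
    entry x < entry y

/-- `v ∈ {1, …, n}` is a descent of the standard tableau `T` if the entry
`v+1` lies in a strictly smaller component than `v`, or in the same component
and a strictly larger row (with the convention that the entry `n+1` lies in
component `0`, so that the last entry `n` is a descent iff its component is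
positive). -/
def StdTableau.IsDescent {r n : ℕ} {Λ : MultiPartition r n}
    (T : StdTableau Λ) (v : Fin n) : Prop :=
  if h : (v : ℕ) + 1 < n then
    ∃ x y : Λ.Box, T.entry x = v ∧ T.entry y = ⟨(v : ℕ) + 1, h⟩ ∧
      ((y.1.1 : ℕ) < (x.1.1 : ℕ) ∨ (x.1.1 = y.1.1 ∧ x.1.2.1 < y.1.2.1))
  else
    ∃ x : Λ.Box, T.entry x = v ∧ 0 < (x.1.1 : ℕ)

/-- `v ∈ {1, …, n}` is a column-descent of the standard tableau `T` if the
entry `v+1` lies in a strictly larger component than `v`, or in the same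
component and a strictly larger column (with the convention on the fictional
entry `n+1` complementary to the one for descents: the last entry `n` is a
column-descent iff its component is `0`). -/
def StdTableau.IsCDescent {r n : ℕ} {Λ : MultiPartition r n}
    (T : StdTableau Λ) (v : Fin n) : Prop :=
  if h : (v : ℕ) + 1 < n then
    ∃ x y : Λ.Box, T.entry x = v ∧ T.entry y = ⟨(v : ℕ) + 1, h⟩ ∧
      ((x.1.1 : ℕ) < (y.1.1 : ℕ) ∨ (x.1.1 = y.1.1 ∧ x.1.2.2 < y.1.2.2))
  else
    ∃ x : Λ.Box, T.entry x = v ∧ (x.1.1 : ℕ) = 0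

/-- The number of descents of a standard tableau. -/
noncomputable def StdTableau.desCount {r n : ℕ} {Λ : MultiPartition r n}
    (T : StdTableau Λ) : ℕ :=
  Nat.card {v : Fin n // T.IsDescent v}

/-- The number of column-descents of a standard tableau. -/
noncomputable def StdTableau.cdesCount {r n : ℕ} {Λ : MultiPartition r n}
    (T : StdTableau Λ) : ℕ :=
  Nat.card {v : Fin n // T.IsCDescent v}

/-- `m_k(Λ)`: the number of standard `Λ`-tableaux with exactly `k`
descents. -/
noncomputable def mCount {r n : ℕ} (Λ : MultiPartition r n) (k : ℕ) : ℕ :=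
  Nat.card {T : StdTableau Λ // T.desCount = k}

/-- `m̄_k(Λ)`: the number of standard `Λ`-tableaux with exactly `k`
column-descents. -/
noncomputable def mbarCount {r n : ℕ} (Λ : MultiPartition r n) (k : ℕ) : ℕ :=
  Nat.card {T : StdTableau Λ // T.cdesCount = k}

/-- `s_k(Λ)`: the number of row-semistandard `x_k`-tableaux of shape `Λ`:
the component `c` is filled with the variables of color `c` (there are `k+1`
variables of color `0` and `k` of every other color), weakly increasing along
rows and strictly increasing down columns. -/
noncomputable def sCount {r n : ℕ} (Λ : MultiPartition r n) (k : ℕ) : ℕ :=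
  Nat.card {e : Λ.Box → ℕ //
    (∀ x : Λ.Box, e x < if (x.1.1 : ℕ) = 0 then k + 1 else k) ∧
    (∀ x y : Λ.Box, x.1.1 = y.1.1 → x.1.2.1 = y.1.2.1 → x.1.2.2 < y.1.2.2 →
      e x ≤ e y) ∧
    (∀ x y : Λ.Box, x.1.1 = y.1.1 → x.1.2.2 = y.1.2.2 → x.1.2.1 < y.1.2.1 →
      e x < e y)}

/-- `c_k(Λ)`: the number of column-semistandard `x_k`-tableaux of shape `Λ`:
the component `c` is filled with the variables of color `c`, weakly increasing
down columns and strictly increasing along rows. -/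
noncomputable def cCount {r n : ℕ} (Λ : MultiPartition r n) (k : ℕ) : ℕ :=
  Nat.card {e : Λ.Box → ℕ //
    (∀ x : Λ.Box, e x < if (x.1.1 : ℕ) = 0 then k + 1 else k) ∧
    (∀ x y : Λ.Box, x.1.1 = y.1.1 → x.1.2.2 = y.1.2.2 → x.1.2.1 < y.1.2.1 →
      e x ≤ e y) ∧
    (∀ x y : Λ.Box, x.1.1 = y.1.1 → x.1.2.1 = y.1.2.1 → x.1.2.2 < y.1.2.2 →
      e x < e y)}

/-! ### Auxiliary material for the proof -/

open Finset

namespace MPAux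

variable {r n : ℕ} {Λ : MultiPartition r n}

/-- component of a box, as a natural number -/
abbrev cmp (x : Λ.Box) : ℕ := (x.1.1 : ℕ)
/-- row of a box -/
abbrev rowOf (x : Λ.Box) : ℕ := x.1.2.1
/-- column of a box -/
abbrev colOf (x : Λ.Box) : ℕ := x.1.2.2

theorem box_prop (x : Λ.Box) : x.1.2.2 < Λ.part x.1.1 x.1.2.1 := x.2

theorem part_le (Λ : MultiPartition r n) (c : Fin r) (a : ℕ) : Λ.part c a ≤ n := by
  rcases lt_or_ge a n with h | h
  · calc Λ.part c a ≤ ∑ a ∈ Finset.range n, Λ.part c a :=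
        Finset.single_le_sum (fun i _ => Nat.zero_le _) (Finset.mem_range.2 h)
    _ ≤ ∑ c : Fin r, ∑ a ∈ Finset.range n, Λ.part c a :=
        Finset.single_le_sum (f := fun c : Fin r => ∑ a ∈ Finset.range n, Λ.part c a)
          (fun i _ => Nat.zero_le _) (Finset.mem_univ c)
    _ = n := Λ.size
  · simp [Λ.vanish c a h]

theorem rowOf_lt (x : Λ.Box) : rowOf x < n := by
  by_contra h
  have h1 := Λ.vanish x.1.1 x.1.2.1 (le_of_not_gt h)
  have h2 := x.2
  omega

theorem colOf_lt (x : Λ.Box) : colOf x < n := lt_of_lt_of_le x.2 (part_le ..)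

/-- boxes as a subtype of a fintype -/
def boxEquiv (Λ : MultiPartition r n) :
    Λ.Box ≃ {y : Fin r × Fin n × Fin n // (y.2.2 : ℕ) < Λ.part y.1 (y.2.1 : ℕ)} where
  toFun x := ⟨(x.1.1, ⟨x.1.2.1, rowOf_lt x⟩, ⟨x.1.2.2, colOf_lt x⟩), x.2⟩
  invFun y := ⟨(y.1.1, ((y.1.2.1 : ℕ), (y.1.2.2 : ℕ))), y.2⟩
  left_inv x := rfl
  right_inv y := rfl

noncomputable instance instFintypeBox : Fintype Λ.Box := by
  classical exact Fintype.ofEquiv _ (boxEquiv Λ).symm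

noncomputable instance : DecidableEq Λ.Box := Classical.decEq _

theorem card_filter_lt {m : ℕ} (h : m ≤ n) :
    (Finset.univ.filter fun b : Fin n => (b : ℕ) < m).card = m := by
  classical
  have : (Finset.univ.filter fun b : Fin n => (b : ℕ) < m)
      = Finset.map (Fin.castLEOrderEmb h).toEmbedding Finset.univ := by
    ext b
    constructor
    · intro hb
      have hb' : (b : ℕ) < m := (Finset.mem_filter.1 hb).2
      exact Finset.mem_map.2 ⟨⟨(b : ℕ), hb'⟩, Finset.mem_univ _, rfl⟩
    · intro hb
      obtain ⟨a, -, rfl⟩ := Finset.mem_map.1 hb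
      exact Finset.mem_filter.2 ⟨Finset.mem_univ _, by exact a.2⟩
  rw [this, Finset.card_map, Finset.card_univ, Fintype.card_fin]

theorem card_box (Λ : MultiPartition r n) : Fintype.card Λ.Box = n := by
  classical
  rw [Fintype.card_congr (boxEquiv Λ), Fintype.card_subtype]
  rw [Finset.card_filter]
  rw [Fintype.sum_prod_type]
  have hinner : ∀ c : Fin r, ∀ a : Fin n,
      (∑ b : Fin n, if ((b : ℕ) < Λ.part c (a : ℕ)) then 1 else 0) = Λ.part c (a : ℕ) := by
    intro c a
    rw [← Finset.card_filter]
    exact card_filter_lt (part_le Λ c (a : ℕ))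
  calc (∑ c : Fin r, ∑ p : Fin n × Fin n,
        if ((p.2 : ℕ) < Λ.part c (p.1 : ℕ)) then 1 else 0)
      = ∑ c : Fin r, ∑ a : Fin n, ∑ b : Fin n,
          if ((b : ℕ) < Λ.part c (a : ℕ)) then 1 else 0 := by
        refine Finset.sum_congr rfl fun c _ => ?_
        rw [Fintype.sum_prod_type]
    _ = ∑ c : Fin r, ∑ a : Fin n, Λ.part c (a : ℕ) := by
        refine Finset.sum_congr rfl fun c _ => Finset.sum_congr rfl fun a _ => hinner c a
    _ = ∑ c : Fin r, ∑ a ∈ Finset.range n, Λ.part c a := by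
        refine Finset.sum_congr rfl fun c _ => ?_
        exact Fin.sum_univ_eq_sum_range (fun a => Λ.part c a) n
    _ = n := Λ.size

theorem ext' {T S : StdTableau Λ} (h : T.entry = S.entry) : T = S := by
  cases T; cases S; cases h; rfl

/-- inverse of the entry bijection -/
noncomputable def box (T : StdTableau Λ) : Fin n → Λ.Box :=
  (Equiv.ofBijective T.entry T.bijective).symm

@[simp] theorem entry_box (T : StdTableau Λ) (v : Fin n) : T.entry (box T v) = v :=
  (Equiv.ofBijective T.entry T.bijective).apply_symm_apply v

@[simp] theorem box_entry (T : StdTableau Λ) (x : Λ.Box) : box T (T.entry x) = x :=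
  (Equiv.ofBijective T.entry T.bijective).symm_apply_apply x

theorem eq_box {T : StdTableau Λ} {x : Λ.Box} {v : Fin n} (h : T.entry x = v) :
    x = box T v := by rw [← h, box_entry]

theorem isDescent_iff (T : StdTableau Λ) (v : Fin n) (h : (v : ℕ) + 1 < n) :
    T.IsDescent v ↔ (cmp (box T ⟨(v : ℕ) + 1, h⟩) < cmp (box T v) ∨
      ((box T v).1.1 = (box T ⟨(v : ℕ) + 1, h⟩).1.1 ∧
        rowOf (box T v) < rowOf (box T ⟨(v : ℕ) + 1, h⟩))) := by
  rw [StdTableau.IsDescent, dif_pos h]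
  constructor
  · rintro ⟨x, y, hx, hy, hc⟩
    rw [eq_box hx, eq_box hy] at hc
    exact hc
  · intro hc
    exact ⟨box T v, box T ⟨(v : ℕ) + 1, h⟩, entry_box .., entry_box .., hc⟩

theorem isDescent_last_iff (T : StdTableau Λ) (v : Fin n) (h : ¬ ((v : ℕ) + 1 < n)) :
    T.IsDescent v ↔ 0 < cmp (box T v) := by
  rw [StdTableau.IsDescent, dif_neg h]
  constructor
  · rintro ⟨x, hx, hc⟩; rwa [eq_box hx] at hc
  · intro hc; exact ⟨box T v, entry_box .., hc⟩

theorem chain_le {f : Fin n → ℕ}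
    (hf : ∀ v : Fin n, ∀ h : (v : ℕ) + 1 < n, f v ≤ f ⟨(v : ℕ) + 1, h⟩)
    {v w : Fin n} (hvw : v ≤ w) : f v ≤ f w := by
  obtain ⟨w, hw⟩ := w
  have hvw' : (v : ℕ) ≤ w := hvw
  clear hvw
  induction w, hvw' using Nat.le_induction with
  | base => have : v = ⟨(v : ℕ), hw⟩ := by ext; rfl
            rw [← this]
  | succ m hm ih =>
      have hm' : m < n := by omega
      exact (ih hm').trans (hf ⟨m, hm'⟩ hw)

theorem comp_step (T : StdTableau Λ) (v : Fin n) (h : (v : ℕ) + 1 < n)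
    (hnd : ¬ T.IsDescent v) : cmp (box T v) ≤ cmp (box T ⟨(v : ℕ) + 1, h⟩) := by
  by_contra hlt
  exact hnd ((isDescent_iff T v h).2 (Or.inl (by omega)))

theorem row_step (T : StdTableau Λ) (v : Fin n) (h : (v : ℕ) + 1 < n)
    (hnd : ¬ T.IsDescent v) (hc : (box T v).1.1 = (box T ⟨(v : ℕ) + 1, h⟩).1.1) :
    rowOf (box T ⟨(v : ℕ) + 1, h⟩) ≤ rowOf (box T v) := by
  by_contra hlt
  exact hnd ((isDescent_iff T v h).2 (Or.inr ⟨hc, by omega⟩))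

theorem comp_mono (T : StdTableau Λ) (v : Fin n) :
    ∀ (w : ℕ) (hw : w < n), (v : ℕ) ≤ w →
      (∀ s : Fin n, v ≤ s → (s : ℕ) < w → ¬ T.IsDescent s) →
      cmp (box T v) ≤ cmp (box T ⟨w, hw⟩) := by
  intro w hw hvw hnd
  induction w, hvw using Nat.le_induction with
  | base => have : v = ⟨(v : ℕ), hw⟩ := by ext; rfl
            rw [← this]
  | succ m hm ih =>
      have hm' : m < n := by omega
      refine (ih hm' (fun s hs hsm => hnd s hs (by omega))).trans ?_
      exact comp_step T ⟨m, hm'⟩ hw (hnd ⟨m, hm'⟩ (by exact hm) (by simp))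

theorem exists_descent_of_cmp_pos (T : StdTableau Λ) (v : Fin n)
    (hc : 0 < cmp (box T v)) : ∃ t : Fin n, v ≤ t ∧ T.IsDescent t := by
  by_contra hcon
  push_neg at hcon
  have hn : 0 < n := v.pos
  have hlast : n - 1 < n := by omega
  have hvl : (v : ℕ) ≤ n - 1 := by have := v.2; omega
  have h1 : cmp (box T v) ≤ cmp (box T ⟨n - 1, hlast⟩) :=
    comp_mono T v (n - 1) hlast hvl (fun s hs _ => hcon s hs)
  have h2 : ¬ T.IsDescent ⟨n - 1, hlast⟩ := hcon _ hvl
  rw [isDescent_last_iff T _ (by show ¬(n - 1 + 1 < n); omega)] at h2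
  exact absurd (lt_of_lt_of_le hc h1) h2

theorem exists_descent_between (T : StdTableau Λ) {v w : Fin n} (hvw : v < w)
    (hc : (box T v).1.1 = (box T w).1.1) (hrow : rowOf (box T v) < rowOf (box T w)) :
    ∃ t : Fin n, v ≤ t ∧ (t : ℕ) < (w : ℕ) ∧ T.IsDescent t := by
  by_contra hcon
  push_neg at hcon
  -- hcon : ∀ t, v ≤ t → (t:ℕ) < (w:ℕ) → ¬descent
  have hcmp_eq : ∀ (u : ℕ) (hu : u < n), (v : ℕ) ≤ u → u ≤ (w : ℕ) →
      cmp (box T ⟨u, hu⟩) = cmp (box T v) := by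
    intro u hu h1 h2
    have a1 : cmp (box T v) ≤ cmp (box T ⟨u, hu⟩) :=
      comp_mono T v u hu h1 (fun s hs hsu => hcon s hs (by omega))
    have a2 : cmp (box T ⟨u, hu⟩) ≤ cmp (box T w) := by
      have := comp_mono T ⟨u, hu⟩ (w : ℕ) w.2 h2
        (fun s hs hsw => hcon s (le_trans (by exact h1) hs) hsw)
      simpa using this
    have a3 : cmp (box T w) = cmp (box T v) := by
      simp only [cmp]; rw [hc]
    omega
  have hrw : ∀ (u : ℕ) (hu : u < n), (v : ℕ) ≤ u → u ≤ (w : ℕ) →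
      rowOf (box T ⟨u, hu⟩) ≤ rowOf (box T v) := by
    intro u hu h1 h2
    induction u, h1 using Nat.le_induction with
    | base => have : v = ⟨(v : ℕ), hu⟩ := by ext; rfl
              rw [← this]
    | succ m hm ih =>
        have hm' : m < n := by omega
        refine le_trans ?_ (ih hm' (by omega))
        have hceq : (box T ⟨m, hm'⟩).1.1 = (box T ⟨m + 1, hu⟩).1.1 := by
          have e1 := hcmp_eq m hm' hm (by omega)
          have e2 := hcmp_eq (m + 1) hu (by omega) h2
          exact Fin.val_injective (e1.trans e2.symm)
        exact row_step T ⟨m, hm'⟩ hu (hcon ⟨m, hm'⟩ (by exact hm) (by show m < (w : ℕ); omega)) hceq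
  have := hrw (w : ℕ) w.2 (le_of_lt hvw) le_rfl
  simp at this
  omega

end MPAux

/-! ### Part 2: semistandard tableaux, standardization -/

namespace MPAux

variable {r n : ℕ} {Λ : MultiPartition r n}

variable (Λ) in
/-- condition bundle abbreviations -/
def Cond1 (k : ℕ) (e : Λ.Box → ℕ) : Prop :=
  ∀ x : Λ.Box, e x < if (x.1.1 : ℕ) = 0 then k + 1 else k
variable (Λ) in
def Cond2 (e : Λ.Box → ℕ) : Prop :=
  ∀ x y : Λ.Box, x.1.1 = y.1.1 → x.1.2.1 = y.1.2.1 → x.1.2.2 < y.1.2.2 → e x ≤ e y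
variable (Λ) in
def Cond3 (e : Λ.Box → ℕ) : Prop :=
  ∀ x y : Λ.Box, x.1.1 = y.1.1 → x.1.2.2 = y.1.2.2 → x.1.2.1 < y.1.2.1 → e x < e y

/-- the geometric lemma: same component, smaller row & smaller column implies
smaller value in a semistandard filling -/
theorem e_lt_of_row_lt {e : Λ.Box → ℕ} (h2 : Cond2 Λ e) (h3 : Cond3 Λ e)
    {x y : Λ.Box} (hc : x.1.1 = y.1.1) (hr : rowOf x < rowOf y) (hcl : colOf x < colOf y) :
    e x < e y := by
  have hpf : x.1.2.2 < Λ.part x.1.1 y.1.2.1 := by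
    have hy := y.2
    simp only [colOf] at hcl
    rw [hc]; omega
  let z : Λ.Box := ⟨(x.1.1, y.1.2.1, x.1.2.2), hpf⟩
  have hxz : e x < e z := h3 x z rfl rfl hr
  have hzy : e z ≤ e y := h2 z y hc rfl hcl
  omega

/-- the key of a box: value, then component, then column, lexicographically -/
def key (e : Λ.Box → ℕ) (x : Λ.Box) : ℕ ×ₗ (ℕ ×ₗ ℕ) :=
  toLex (e x, toLex ((x.1.1 : ℕ), x.1.2.2))

theorem key_lt_iff {e : Λ.Box → ℕ} {x y : Λ.Box} :
    key e x < key e y ↔ (e x < e y ∨ (e x = e y ∧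
      (cmp x < cmp y ∨ (cmp x = cmp y ∧ colOf x < colOf y)))) := by
  unfold key
  rw [Prod.Lex.lt_iff, Prod.Lex.lt_iff]
  exact Iff.rfl

theorem key_eq_iff {e : Λ.Box → ℕ} {x y : Λ.Box} :
    key e x = key e y ↔ (e x = e y ∧ cmp x = cmp y ∧ colOf x = colOf y) := by
  unfold key
  simp only [toLex_inj, Prod.mk.injEq, cmp, colOf]

theorem key_inj {e : Λ.Box → ℕ} (h3 : Cond3 Λ e) : Function.Injective (key e) := by
  intro x y h
  obtain ⟨he, hcmp, hcl⟩ := key_eq_iff.1 h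
  have hcF : x.1.1 = y.1.1 := Fin.val_injective hcmp
  rcases lt_trichotomy (rowOf x) (rowOf y) with hr | hr | hr
  · exact absurd (h3 x y hcF hcl hr) (by omega)
  · apply Subtype.ext
    exact Prod.ext hcF (Prod.ext hr hcl)
  · exact absurd (h3 y x hcF.symm hcl.symm hr) (by omega)

open Classical in
/-- the rank of a box among all boxes, ordered by key -/
noncomputable def rnk (e : Λ.Box → ℕ) (x : Λ.Box) : ℕ :=
  (Finset.univ.filter fun y : Λ.Box => key e y < key e x).card

theorem rnk_lt (e : Λ.Box → ℕ) (x : Λ.Box) : rnk e x < n := by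
  classical
  have h1 : (Finset.univ.filter fun y : Λ.Box => key e y < key e x) ⊂ Finset.univ := by
    refine Finset.ssubset_univ_iff.2 ?_
    intro h
    have := h ▸ Finset.mem_univ x
    have := (Finset.mem_filter.1 (h ▸ Finset.mem_univ x)).2
    exact absurd this (lt_irrefl _)
  have := Finset.card_lt_card h1
  rw [Finset.card_univ, card_box Λ] at this
  unfold rnk
  exact this

theorem rnk_lt_rnk {e : Λ.Box → ℕ} {x y : Λ.Box} (h : key e x < key e y) :
    rnk e x < rnk e y := by
  classical
  apply Finset.card_lt_card
  constructor
  · intro z hz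
    exact Finset.mem_filter.2 ⟨Finset.mem_univ _, lt_trans (Finset.mem_filter.1 hz).2 h⟩
  · intro hsub
    have := (Finset.mem_filter.1 (hsub (Finset.mem_filter.2 ⟨Finset.mem_univ x, h⟩))).2
    exact absurd this (lt_irrefl _)

theorem key_lt_of_rnk_lt {e : Λ.Box → ℕ} (h3 : Cond3 Λ e) {x y : Λ.Box}
    (h : rnk e x < rnk e y) : key e x < key e y := by
  rcases lt_trichotomy (key e x) (key e y) with hk | hk | hk
  · exact hk
  · rw [key_inj h3 hk] at h; exact absurd h (lt_irrefl _)
  · exact absurd (rnk_lt_rnk hk) (by omega)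

theorem rnk_inj {e : Λ.Box → ℕ} (h3 : Cond3 Λ e) : Function.Injective (rnk e) := by
  intro x y h
  rcases lt_trichotomy (key e x) (key e y) with hk | hk | hk
  · exact absurd (rnk_lt_rnk hk) (by omega)
  · exact key_inj h3 hk
  · exact absurd (rnk_lt_rnk hk) (by omega)

/-- standardization of a semistandard filling -/
noncomputable def stdOf (e : Λ.Box → ℕ) (h2 : Cond2 Λ e) (h3 : Cond3 Λ e) :
    StdTableau Λ where
  entry x := ⟨rnk e x, rnk_lt e x⟩
  bijective := by
    refine (Fintype.bijective_iff_injective_and_card _).2 ⟨?_, ?_⟩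
    · intro x y h
      exact rnk_inj h3 (congrArg Fin.val h)
    · rw [card_box, Fintype.card_fin]
  row_lt := by
    intro x y hcF hr hcl
    show (⟨rnk e x, _⟩ : Fin n) < ⟨rnk e y, _⟩
    rw [Fin.mk_lt_mk]
    apply rnk_lt_rnk
    rw [key_lt_iff]
    rcases lt_or_eq_of_le (h2 x y hcF hr hcl) with h | h
    · exact Or.inl h
    · exact Or.inr ⟨h, Or.inr ⟨congrArg Fin.val hcF, hcl⟩⟩
  col_lt := by
    intro x y hcF hcl hr
    show (⟨rnk e x, _⟩ : Fin n) < ⟨rnk e y, _⟩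
    rw [Fin.mk_lt_mk]
    exact rnk_lt_rnk (key_lt_iff.2 (Or.inl (h3 x y hcF hcl hr)))

theorem stdOf_entry (e : Λ.Box → ℕ) (h2 : Cond2 Λ e) (h3 : Cond3 Λ e) (x : Λ.Box) :
    ((stdOf e h2 h3).entry x : ℕ) = rnk e x := rfl

end MPAux

/-! ### Part 3: compatible sequences and the main bijection -/

namespace MPAux

variable {r n : ℕ} {Λ : MultiPartition r n}

/-- sequences compatible with a standard tableau -/
def Compat (T : StdTableau Λ) (k : ℕ) : Type _ :=
  {b : Fin n → ℕ //
    (∀ v : Fin n, ∀ h : (v : ℕ) + 1 < n,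
      b v ≤ b ⟨(v : ℕ) + 1, h⟩ ∧ (T.IsDescent v → b v < b ⟨(v : ℕ) + 1, h⟩)) ∧
    (∀ v : Fin n, ¬ ((v : ℕ) + 1 < n) → b v ≤ k ∧ (T.IsDescent v → b v < k))}

section CompatLemmas

variable {T : StdTableau Λ} {k : ℕ} {b : Fin n → ℕ}

theorem b_mono
    (h1 : ∀ v : Fin n, ∀ h : (v : ℕ) + 1 < n,
      b v ≤ b ⟨(v : ℕ) + 1, h⟩ ∧ (T.IsDescent v → b v < b ⟨(v : ℕ) + 1, h⟩))
    {v w : Fin n} (hvw : v ≤ w) : b v ≤ b w :=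
  chain_le (fun v h => (h1 v h).1) hvw

theorem b_le_k
    (h1 : ∀ v : Fin n, ∀ h : (v : ℕ) + 1 < n,
      b v ≤ b ⟨(v : ℕ) + 1, h⟩ ∧ (T.IsDescent v → b v < b ⟨(v : ℕ) + 1, h⟩))
    (h2 : ∀ v : Fin n, ¬ ((v : ℕ) + 1 < n) → b v ≤ k ∧ (T.IsDescent v → b v < k))
    (v : Fin n) : b v ≤ k := by
  have hn : 0 < n := v.pos
  have hlast : n - 1 < n := by omega
  have ha : b v ≤ b ⟨n - 1, hlast⟩ :=
    b_mono h1 (by rw [Fin.le_def]; simp; have := v.2; omega)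
  have hb := (h2 ⟨n - 1, hlast⟩ (by simp; omega)).1
  exact ha.trans hb

theorem b_lt_k
    (h1 : ∀ v : Fin n, ∀ h : (v : ℕ) + 1 < n,
      b v ≤ b ⟨(v : ℕ) + 1, h⟩ ∧ (T.IsDescent v → b v < b ⟨(v : ℕ) + 1, h⟩))
    (h2 : ∀ v : Fin n, ¬ ((v : ℕ) + 1 < n) → b v ≤ k ∧ (T.IsDescent v → b v < k))
    (v : Fin n) (hc : 0 < cmp (box T v)) : b v < k := by
  obtain ⟨t, hvt, hdt⟩ := exists_descent_of_cmp_pos T v hc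
  by_cases ht : (t : ℕ) + 1 < n
  · have hs : b t < b ⟨(t : ℕ) + 1, ht⟩ := (h1 t ht).2 hdt
    have h3 : b ⟨(t : ℕ) + 1, ht⟩ ≤ k := b_le_k h1 h2 _
    have h4 : b v ≤ b t := b_mono h1 hvt
    omega
  · have hs : b t < k := (h2 t ht).2 hdt
    have h4 : b v ≤ b t := b_mono h1 hvt
    omega

theorem b_strict_between
    (h1 : ∀ v : Fin n, ∀ h : (v : ℕ) + 1 < n,
      b v ≤ b ⟨(v : ℕ) + 1, h⟩ ∧ (T.IsDescent v → b v < b ⟨(v : ℕ) + 1, h⟩))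
    {v w t : Fin n} (hvt : v ≤ t) (htw : (t : ℕ) < (w : ℕ)) (hd : T.IsDescent t) :
    b v < b w := by
  have ht : (t : ℕ) + 1 < n := by have := w.2; omega
  have hs : b t < b ⟨(t : ℕ) + 1, ht⟩ := (h1 t ht).2 hd
  have h4 : b v ≤ b t := b_mono h1 hvt
  have h5 : b ⟨(t : ℕ) + 1, ht⟩ ≤ b w := b_mono h1 (by rw [Fin.le_def]; simp; omega)
  omega

/-- the filling associated to a tableau and a compatible sequence is
semistandard -/
theorem cond1_of_compat
    (h1 : ∀ v : Fin n, ∀ h : (v : ℕ) + 1 < n,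
      b v ≤ b ⟨(v : ℕ) + 1, h⟩ ∧ (T.IsDescent v → b v < b ⟨(v : ℕ) + 1, h⟩))
    (h2 : ∀ v : Fin n, ¬ ((v : ℕ) + 1 < n) → b v ≤ k ∧ (T.IsDescent v → b v < k)) :
    Cond1 Λ k (fun x => b (T.entry x)) := by
  intro x
  by_cases hx : (x.1.1 : ℕ) = 0
  · rw [if_pos hx]
    exact Nat.lt_succ_of_le (b_le_k h1 h2 _)
  · rw [if_neg hx]
    refine b_lt_k h1 h2 _ ?_
    rw [box_entry]
    show 0 < (x.1.1 : ℕ)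
    omega

theorem cond2_of_compat
    (h1 : ∀ v : Fin n, ∀ h : (v : ℕ) + 1 < n,
      b v ≤ b ⟨(v : ℕ) + 1, h⟩ ∧ (T.IsDescent v → b v < b ⟨(v : ℕ) + 1, h⟩)) :
    Cond2 Λ (fun x => b (T.entry x)) := by
  intro x y hcF hr hcl
  exact b_mono h1 (le_of_lt (T.row_lt x y hcF hr hcl))

theorem cond3_of_compat
    (h1 : ∀ v : Fin n, ∀ h : (v : ℕ) + 1 < n,
      b v ≤ b ⟨(v : ℕ) + 1, h⟩ ∧ (T.IsDescent v → b v < b ⟨(v : ℕ) + 1, h⟩)) :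
    Cond3 Λ (fun x => b (T.entry x)) := by
  intro x y hcF hcl hr
  have he : T.entry x < T.entry y := T.col_lt x y hcF hcl hr
  obtain ⟨t, hvt, htw, hdt⟩ := exists_descent_between T he
    (by rw [box_entry, box_entry]; exact hcF)
    (by rw [box_entry, box_entry]; exact hr)
  exact b_strict_between h1 hvt htw hdt

end CompatLemmas

/-- entries in the same component with weakly smaller row must be in a
strictly smaller column, if the entry is smaller -/
theorem col_lt_of_entry_lt (T : StdTableau Λ) {x y : Λ.Box} (hc : x.1.1 = y.1.1)
    (hr : rowOf y ≤ rowOf x) (he : T.entry x < T.entry y) : colOf x < colOf y := by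
  by_contra hcl
  push_neg at hcl
  rcases eq_or_lt_of_le hr with hreq | hrlt
  · rcases eq_or_lt_of_le hcl with hcleq | hcllt
    · have : y = x := Subtype.ext (Prod.ext hc.symm (Prod.ext hreq hcleq))
      rw [this] at he
      exact absurd he (lt_irrefl _)
    · have := T.row_lt y x hc.symm hreq hcllt
      omega
  · have hz : y.1.2.2 < Λ.part x.1.1 x.1.2.1 := by
      have := x.2
      simp only [colOf] at hcl
      omega
    let z : Λ.Box := ⟨(x.1.1, x.1.2.1, y.1.2.2), hz⟩
    have e1 : T.entry y < T.entry z := T.col_lt y z hc.symm rfl hrlt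
    rcases eq_or_lt_of_le hcl with hcleq | hcllt
    · have : z = x := Subtype.ext (Prod.ext rfl (Prod.ext rfl hcleq))
      rw [this] at e1
      omega
    · have e2 : T.entry z < T.entry x := T.row_lt z x rfl rfl hcllt
      omega

section KeyStep

variable {T : StdTableau Λ} {k : ℕ} {b : Fin n → ℕ}

theorem key_step
    (h1 : ∀ v : Fin n, ∀ h : (v : ℕ) + 1 < n,
      b v ≤ b ⟨(v : ℕ) + 1, h⟩ ∧ (T.IsDescent v → b v < b ⟨(v : ℕ) + 1, h⟩))
    (v : Fin n) (h : (v : ℕ) + 1 < n) :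
    key (fun x => b (T.entry x)) (box T v)
      < key (fun x => b (T.entry x)) (box T ⟨(v : ℕ) + 1, h⟩) := by
  rw [key_lt_iff]
  simp only [entry_box]
  have hb1 : b v ≤ b ⟨(v : ℕ) + 1, h⟩ := (h1 v h).1
  rcases eq_or_lt_of_le hb1 with heq | hlt
  swap
  · exact Or.inl hlt
  refine Or.inr ⟨heq, ?_⟩
  have hnd : ¬ T.IsDescent v := fun hd => by have := (h1 v h).2 hd; omega
  have hcs := comp_step T v h hnd
  rcases eq_or_lt_of_le hcs with hceq | hclt
  swap
  · exact Or.inl hclt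
  refine Or.inr ⟨hceq, ?_⟩
  have hcF : (box T v).1.1 = (box T ⟨(v : ℕ) + 1, h⟩).1.1 := Fin.val_injective hceq
  have hrow := row_step T v h hnd hcF
  refine col_lt_of_entry_lt T hcF hrow ?_
  rw [entry_box, entry_box]
  rw [Fin.lt_def]
  simp

theorem key_mono
    (h1 : ∀ v : Fin n, ∀ h : (v : ℕ) + 1 < n,
      b v ≤ b ⟨(v : ℕ) + 1, h⟩ ∧ (T.IsDescent v → b v < b ⟨(v : ℕ) + 1, h⟩))
    {v w : Fin n} (hvw : v < w) :
    key (fun x => b (T.entry x)) (box T v) < key (fun x => b (T.entry x)) (box T w) := by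
  obtain ⟨w, hw⟩ := w
  have hvw' : (v : ℕ) + 1 ≤ w := hvw
  clear hvw
  induction w, hvw' using Nat.le_induction with
  | base => exact key_step h1 v hw
  | succ m hm ih =>
      have hm' : m < n := by omega
      exact (ih hm').trans (key_step h1 ⟨m, hm'⟩ hw)

theorem rnk_eq_entry
    (h1 : ∀ v : Fin n, ∀ h : (v : ℕ) + 1 < n,
      b v ≤ b ⟨(v : ℕ) + 1, h⟩ ∧ (T.IsDescent v → b v < b ⟨(v : ℕ) + 1, h⟩))
    (x : Λ.Box) : rnk (fun x => b (T.entry x)) x = (T.entry x : ℕ) := by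
  classical
  set e' : Λ.Box → ℕ := fun x => b (T.entry x) with he'
  have hiff : ∀ y : Λ.Box, key e' y < key e' x ↔ T.entry y < T.entry x := by
    intro y
    constructor
    · intro hk
      rcases lt_trichotomy (T.entry y) (T.entry x) with hh | hh | hh
      · exact hh
      · rw [T.bijective.1 hh] at hk
        exact absurd hk (lt_irrefl _)
      · have := key_mono h1 hh
        rw [box_entry, box_entry] at this
        exact absurd hk (asymm this)
    · intro hh
      have := key_mono h1 hh
      rwa [box_entry, box_entry] at this
  unfold rnk
  rw [Finset.filter_congr (fun y _ => hiff y)]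
  rw [← card_filter_lt (le_of_lt (T.entry x).2)]
  apply Finset.card_bij (fun y _ => T.entry y)
  · intro a ha
    simp only [Finset.mem_filter, Finset.mem_univ, true_and]
    exact (Finset.mem_filter.1 ha).2
  · intro a₁ _ a₂ _ hh
    exact T.bijective.1 hh
  · intro w hw
    refine ⟨box T w, ?_, entry_box ..⟩
    simp only [Finset.mem_filter, Finset.mem_univ, true_and] at hw ⊢
    rw [entry_box]
    exact hw

end KeyStep

/-- the inverse map of standardization -/
noncomputable def unStd (T : StdTableau Λ) (k : ℕ) (B : Compat T k) :
    {e : Λ.Box → ℕ // Cond1 Λ k e ∧ Cond2 Λ e ∧ Cond3 Λ e} :=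
  ⟨fun x => B.1 (T.entry x),
    cond1_of_compat B.2.1 B.2.2, cond2_of_compat B.2.1, cond3_of_compat B.2.1⟩

theorem unStd_bijective (Λ : MultiPartition r n) (k : ℕ) :
    Function.Bijective
      (fun X : (Σ T : StdTableau Λ, Compat T k) => unStd X.1 k X.2) := by
  constructor
  · rintro ⟨T₁, b₁, hb₁⟩ ⟨T₂, b₂, hb₂⟩ hgg
    have he' : (fun x => b₁ (T₁.entry x)) = (fun x => b₂ (T₂.entry x)) :=
      congrArg Subtype.val hgg
    have hT : T₁ = T₂ := by
      apply ext'
      funext x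
      apply Fin.val_injective
      rw [← rnk_eq_entry hb₁.1 x, ← rnk_eq_entry hb₂.1 x, he']
    subst hT
    have hb : b₁ = b₂ := by
      funext v
      have := congrFun he' (box T₁ v)
      simpa only [entry_box] using this
    subst hb
    rfl
  · rintro ⟨e, c1, c2, c3⟩
    set T := stdOf e c2 c3 with hT
    have hrnk : ∀ v : Fin n, ∀ x : Λ.Box, T.entry x = v → rnk e x = (v : ℕ) := by
      intro v x hx
      rw [← hx]; rfl
    have hkey : ∀ v w : Fin n, v < w → key e (box T v) < key e (box T w) := by
      intro v w hvw
      apply key_lt_of_rnk_lt c3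
      rw [hrnk v (box T v) (entry_box ..), hrnk w (box T w) (entry_box ..)]
      exact hvw
    have hb : (∀ v : Fin n, ∀ h : (v : ℕ) + 1 < n,
        e (box T v) ≤ e (box T ⟨(v : ℕ) + 1, h⟩) ∧
          (T.IsDescent v → e (box T v) < e (box T ⟨(v : ℕ) + 1, h⟩))) ∧
        (∀ v : Fin n, ¬ ((v : ℕ) + 1 < n) →
          e (box T v) ≤ k ∧ (T.IsDescent v → e (box T v) < k)) := by
      constructor
      · intro v h
        have hk := hkey v ⟨(v : ℕ) + 1, h⟩ (by rw [Fin.lt_def]; simp)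
        rw [key_lt_iff] at hk
        constructor
        · rcases hk with hk | ⟨hk, -⟩
          · omega
          · omega
        · intro hd
          rw [isDescent_iff T v h] at hd
          rcases hk with hk | ⟨hkeq, hk2⟩
          · exact hk
          · exfalso
            rcases hd with hd | ⟨hdF, hdrow⟩
            · rcases hk2 with hk2 | ⟨hk2, -⟩
              · omega
              · omega
            · rcases hk2 with hk2 | ⟨-, hk2col⟩
              · have := congrArg Fin.val hdF
                simp only [cmp] at hk2
                omega
              · have := e_lt_of_row_lt c2 c3 hdF hdrow hk2col
                omega
      · intro v h
        have hc1 := c1 (box T v)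
        rw [isDescent_last_iff T v h]
        by_cases hx : ((box T v).1.1 : ℕ) = 0
        · rw [if_pos hx] at hc1
          exact ⟨by omega, by intro hcp; exfalso; simp only [cmp] at hcp; omega⟩
        · rw [if_neg hx] at hc1
          exact ⟨by omega, fun _ => hc1⟩
    refine ⟨⟨T, ⟨fun v => e (box T v), hb⟩⟩, ?_⟩
    apply Subtype.ext
    funext x
    show e (box T (T.entry x)) = e x
    rw [box_entry]

end MPAux

/-! ### Part 4: counting compatible sequences -/

namespace MPAux

variable {r n : ℕ} {Λ : MultiPartition r n}

open Classical

noncomputable instance instFintypeStd : Fintype (StdTableau Λ) := by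
  classical
  exact Fintype.ofInjective (fun T : StdTableau Λ => T.entry) (fun T S h => ext' h)

noncomputable instance instFintypeCompat (T : StdTableau Λ) (k : ℕ) :
    Fintype (Compat T k) := by
  classical
  refine Fintype.ofInjective
    (fun B : Compat T k => (fun v =>
      (⟨B.1 v, Nat.lt_succ_of_le (b_le_k B.2.1 B.2.2 v)⟩ : Fin (k + 1)) : Fin n → Fin (k + 1)))
    ?_
  intro B₁ B₂ h
  apply Subtype.ext
  funext v
  exact congrArg Fin.val (congrFun h v)

/-- number of descents smaller than `m` -/
noncomputable def dB (T : StdTableau Λ) (m : ℕ) : ℕ :=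
  ((Finset.univ : Finset (Fin n)).filter fun s : Fin n => (s : ℕ) < m ∧ T.IsDescent s).card

theorem dB_zero (T : StdTableau Λ) : dB T 0 = 0 := by
  classical
  unfold dB
  convert Finset.card_empty
  simp

theorem dB_succ (T : StdTableau Λ) (m : ℕ) (hm : m < n) :
    dB T (m + 1) = dB T m + (if T.IsDescent ⟨m, hm⟩ then 1 else 0) := by
  classical
  unfold dB
  by_cases hd : T.IsDescent ⟨m, hm⟩
  · rw [if_pos hd]
    have hset : ((Finset.univ : Finset (Fin n)).filter fun s : Fin n => (s : ℕ) < m + 1 ∧ T.IsDescent s)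
        = insert ⟨m, hm⟩ ((Finset.univ : Finset (Fin n)).filter fun s : Fin n => (s : ℕ) < m ∧ T.IsDescent s) := by
      ext s
      simp only [Finset.mem_filter, Finset.mem_univ, true_and, Finset.mem_insert]
      constructor
      · rintro ⟨hs1, hs2⟩
        rcases Nat.lt_or_ge (s : ℕ) m with h | h
        · exact Or.inr ⟨h, hs2⟩
        · exact Or.inl (Fin.ext (show (s : ℕ) = m by omega))
      · rintro (hs | ⟨hs1, hs2⟩)
        · subst hs; exact ⟨show m < m + 1 by omega, hd⟩
        · exact ⟨by omega, hs2⟩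
    rw [hset, Finset.card_insert_of_notMem (by simp)]
  · rw [if_neg hd]
    rw [add_zero]
    congr 1
    apply Finset.filter_congr
    intro s _
    constructor
    · rintro ⟨hs1, hs2⟩
      refine ⟨?_, hs2⟩
      rcases Nat.lt_or_ge (s : ℕ) m with h | h
      · exact h
      · exfalso; apply hd
        have : s = ⟨m, hm⟩ := Fin.ext (show (s : ℕ) = m by omega)
        rwa [← this]
    · rintro ⟨hs1, hs2⟩; exact ⟨by omega, hs2⟩

theorem dB_succ' (T : StdTableau Λ) (v : Fin n) :
    dB T ((v : ℕ) + 1) = dB T (v : ℕ) + (if T.IsDescent v then 1 else 0) := by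
  rw [dB_succ T (v : ℕ) v.2]

theorem desCount_eq_dB (T : StdTableau Λ) : T.desCount = dB T n := by
  classical
  rw [StdTableau.desCount, Nat.card_eq_fintype_card, Fintype.card_subtype]
  unfold dB
  congr 1
  apply Finset.filter_congr
  intro s _
  simp [s.2]

section Count

variable {T : StdTableau Λ} {k : ℕ} {b : Fin n → ℕ}

theorem dB_le_b
    (h1 : ∀ v : Fin n, ∀ h : (v : ℕ) + 1 < n,
      b v ≤ b ⟨(v : ℕ) + 1, h⟩ ∧ (T.IsDescent v → b v < b ⟨(v : ℕ) + 1, h⟩))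
    (v : Fin n) : dB T (v : ℕ) ≤ b v := by
  obtain ⟨m, hv⟩ := v
  induction m with
  | zero => simp [dB_zero]
  | succ m ih =>
      have hm : m < n := by omega
      have hstep := dB_succ T m hm
      have hih := ih hm
      have hcons := h1 ⟨m, hm⟩ hv
      simp only [Fin.val_mk] at hcons hstep hih ⊢
      by_cases hd : T.IsDescent ⟨m, hm⟩
      · have := hcons.2 hd
        rw [hstep, if_pos hd]
        omega
      · have := hcons.1
        rw [hstep, if_neg hd]
        omega

/-- monotonicity of the shifted sequence -/
theorem dB_add_le
    (h1 : ∀ v : Fin n, ∀ h : (v : ℕ) + 1 < n,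
      b v ≤ b ⟨(v : ℕ) + 1, h⟩ ∧ (T.IsDescent v → b v < b ⟨(v : ℕ) + 1, h⟩))
    {v : Fin n} : ∀ (w : ℕ) (hw : w < n), (v : ℕ) ≤ w →
      b v + dB T w ≤ b ⟨w, hw⟩ + dB T (v : ℕ) := by
  intro w hw hvw
  induction w, hvw using Nat.le_induction with
  | base =>
      have : (⟨(v : ℕ), hw⟩ : Fin n) = v := Fin.eta v hw
      rw [this]
  | succ m hm ih =>
      have hm' : m < n := by omega
      have hih := ih hm'
      have hstep := dB_succ T m hm'
      have hcons := h1 ⟨m, hm'⟩ hw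
      simp only [Fin.val_mk] at hcons
      by_cases hd : T.IsDescent ⟨m, hm'⟩
      · have := hcons.2 hd
        rw [hstep, if_pos hd]
        omega
      · have := hcons.1
        rw [hstep, if_neg hd]
        omega

theorem desCount_le_of_compat (T : StdTableau Λ) (k : ℕ) (B : Compat T k) :
    T.desCount ≤ k := by
  rcases Nat.eq_zero_or_pos n with hn | hn
  · rw [desCount_eq_dB]
    refine le_trans (Finset.card_filter_le _ _) ?_
    rw [Finset.card_univ, Fintype.card_fin]
    omega
  · obtain ⟨b, h1, h2⟩ := B
    have hlast : n - 1 < n := by omega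
    set vl : Fin n := ⟨n - 1, hlast⟩ with hvl
    have hdb : dB T (n - 1) ≤ b vl := dB_le_b h1 vl
    have hl2 := h2 vl (by show ¬(n - 1 + 1 < n); omega)
    have hd : dB T n = dB T (n - 1) + (if T.IsDescent vl then 1 else 0) := by
      have := dB_succ T (n - 1) hlast
      rw [show n - 1 + 1 = n by omega] at this
      exact this
    rw [desCount_eq_dB]
    by_cases hdl : T.IsDescent vl
    · have := hl2.2 hdl
      rw [hd, if_pos hdl]
      omega
    · rw [hd, if_neg hdl]
      omega

end Count

/-- monotone sequences bounded by `m` -/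
def MonoSet (n m : ℕ) : Type :=
  {c : Fin n → ℕ // (∀ v : Fin n, ∀ h : (v : ℕ) + 1 < n, c v ≤ c ⟨(v : ℕ) + 1, h⟩) ∧
    ∀ v : Fin n, c v ≤ m}

noncomputable def compatEquiv (T : StdTableau Λ) (k : ℕ) (hd : T.desCount ≤ k) :
    Compat T k ≃ MonoSet n (k - T.desCount) where
  toFun B := by
    refine ⟨fun v => B.1 v - dB T (v : ℕ), ?_, ?_⟩
    · intro v h
      have hle1 := dB_le_b B.2.1 v
      have hle2 := dB_le_b B.2.1 ⟨(v : ℕ) + 1, h⟩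
      have hstep := dB_succ' T v
      have hcons := (B.2.1 v h).1
      have hstrict := (B.2.1 v h).2
      simp only [Fin.val_mk] at hle2 ⊢
      by_cases hdd : T.IsDescent v
      · have := hstrict hdd
        rw [if_pos hdd] at hstep
        omega
      · rw [if_neg hdd] at hstep
        omega
    · intro v
      show B.1 v - dB T (v : ℕ) ≤ k - T.desCount
      have hn : 0 < n := v.pos
      have hlast : n - 1 < n := by omega
      have hmono := dB_add_le (v := v) B.2.1 (n - 1) hlast (by have := v.2; omega)
      have hl2 := B.2.2 ⟨n - 1, hlast⟩ (by show ¬(n - 1 + 1 < n); omega)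
      have hdn : dB T n = dB T (n - 1) + (if T.IsDescent ⟨n - 1, hlast⟩ then 1 else 0) := by
        have := dB_succ T (n - 1) hlast
        rw [show n - 1 + 1 = n by omega] at this
        exact this
      have hdesc := desCount_eq_dB T
      have hle1 := dB_le_b B.2.1 v
      by_cases hdl : T.IsDescent ⟨n - 1, hlast⟩
      · have := hl2.2 hdl
        rw [if_pos hdl] at hdn
        omega
      · have := hl2.1
        rw [if_neg hdl] at hdn
        omega
  invFun C := by
    refine ⟨fun v => C.1 v + dB T (v : ℕ), ?_, ?_⟩
    · intro v h
      have hstep := dB_succ' T v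
      have hcons := C.2.1 v h
      simp only [Fin.val_mk]
      by_cases hdd : T.IsDescent v
      · rw [if_pos hdd] at hstep
        exact ⟨by omega, fun _ => by omega⟩
      · rw [if_neg hdd] at hstep
        exact ⟨by omega, fun hcontra => absurd hcontra hdd⟩
    · intro v h
      show C.1 v + dB T (v : ℕ) ≤ k ∧ (T.IsDescent v → C.1 v + dB T (v : ℕ) < k)
      have hv : (v : ℕ) = n - 1 := by have := v.2; omega
      have hbound := C.2.2 v
      have hdn : dB T n = dB T (v : ℕ) + (if T.IsDescent v then 1 else 0) := by
        have := dB_succ' T v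
        rw [show (v : ℕ) + 1 = n by omega] at this
        exact this
      have hdesc := desCount_eq_dB T
      by_cases hdl : T.IsDescent v
      · rw [if_pos hdl] at hdn
        exact ⟨by omega, fun _ => by omega⟩
      · rw [if_neg hdl] at hdn
        exact ⟨by omega, fun hcontra => absurd hcontra hdl⟩
  left_inv B := by
    apply Subtype.ext
    funext v
    have hle1 := dB_le_b B.2.1 v
    show B.1 v - dB T (v : ℕ) + dB T (v : ℕ) = B.1 v
    omega
  right_inv C := by
    apply Subtype.ext
    funext v
    show C.1 v + dB T (v : ℕ) - dB T (v : ℕ) = C.1 v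
    omega

end MPAux

/-! ### Part 5: counting monotone sequences, and the final assembly -/

namespace MPAux

variable {r n : ℕ} {Λ : MultiPartition r n}

theorem strictMono_le_apply {n N : ℕ} {g : Fin n → Fin N} (hg : StrictMono g)
    (v : Fin n) : (v : ℕ) ≤ (g v : ℕ) := by
  obtain ⟨m, hv⟩ := v
  induction m with
  | zero => exact Nat.zero_le _
  | succ p ih =>
      have hp : p < n := by omega
      have h1 := ih hp
      have h2 : g ⟨p, hp⟩ < g ⟨p + 1, hv⟩ := hg (by rw [Fin.lt_def]; simp)
      rw [Fin.lt_def] at h2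
      simp only [Fin.val_mk] at h1 h2 ⊢
      omega

theorem strictMono_add_le {n N : ℕ} {g : Fin n → Fin N} (hg : StrictMono g)
    (v : Fin n) : ∀ (w : ℕ) (hw : w < n), (v : ℕ) ≤ w →
      (g v : ℕ) + (w - (v : ℕ)) ≤ (g ⟨w, hw⟩ : ℕ) := by
  intro w hw hvw
  induction w, hvw using Nat.le_induction with
  | base =>
      rw [Fin.eta v hw]
      omega
  | succ m hm ih =>
      have hm' : m < n := by omega
      have h1 := ih hm'
      have h2 : g ⟨m, hm'⟩ < g ⟨m + 1, hw⟩ := hg (by rw [Fin.lt_def]; simp)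
      rw [Fin.lt_def] at h2
      omega

/-- the strictly increasing function associated to a bounded monotone
sequence -/
def fC {n m : ℕ} (C : MonoSet n m) (v : Fin n) : Fin (n + m) :=
  ⟨C.1 v + (v : ℕ), by have h1 := C.2.2 v; have h2 := v.2; omega⟩

theorem fC_strictMono {n m : ℕ} (C : MonoSet n m) : StrictMono (fC C) := by
  intro v w h
  have h1 : C.1 v ≤ C.1 w := chain_le C.2.1 (le_of_lt h)
  have h2 : (v : ℕ) < (w : ℕ) := h
  rw [Fin.lt_def]
  show C.1 v + (v : ℕ) < C.1 w + (w : ℕ)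
  omega

/-- inverse map: from a finset to a bounded monotone sequence -/
noncomputable def gC (n m : ℕ) (S : {s : Finset (Fin (n + m)) // s.card = n}) :
    MonoSet n m := by
  refine ⟨fun v => ((S.1.orderEmbOfFin S.2 v : Fin (n + m)) : ℕ) - (v : ℕ), ?_, ?_⟩
  · intro v h
    have hsm := (S.1.orderEmbOfFin S.2).strictMono
    have h1 := strictMono_le_apply hsm v
    have h2 : S.1.orderEmbOfFin S.2 v < S.1.orderEmbOfFin S.2 ⟨(v : ℕ) + 1, h⟩ :=
      hsm (by rw [Fin.lt_def]; simp)
    rw [Fin.lt_def] at h2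
    simp only [Fin.val_mk] at h2 ⊢
    omega
  · intro v
    show ((S.1.orderEmbOfFin S.2 v : Fin (n + m)) : ℕ) - (v : ℕ) ≤ m
    have hsm := (S.1.orderEmbOfFin S.2).strictMono
    have hn : 0 < n := v.pos
    have hlast : n - 1 < n := by omega
    have h1 := strictMono_add_le hsm v (n - 1) hlast (by have := v.2; omega)
    have h2 : ((S.1.orderEmbOfFin S.2 ⟨n - 1, hlast⟩ : Fin (n + m)) : ℕ) < n + m :=
      (S.1.orderEmbOfFin S.2 ⟨n - 1, hlast⟩).2
    have h3 := v.2
    omega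

noncomputable def monoEquiv (n m : ℕ) :
    MonoSet n m ≃ {s : Finset (Fin (n + m)) // s.card = n} where
  toFun C := ⟨Finset.image (fC C) Finset.univ, by
    rw [Finset.card_image_of_injective _ (fC_strictMono C).injective,
      Finset.card_univ, Fintype.card_fin]⟩
  invFun S := gC n m S
  left_inv C := by
    apply Subtype.ext
    funext v
    have hcard : (Finset.image (fC C) Finset.univ).card = n := by
      rw [Finset.card_image_of_injective _ (fC_strictMono C).injective,
        Finset.card_univ, Fintype.card_fin]
    have hemb : fC C = ⇑((Finset.image (fC C) Finset.univ).orderEmbOfFin hcard) :=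
      Finset.orderEmbOfFin_unique hcard
        (fun x => Finset.mem_image_of_mem _ (Finset.mem_univ x)) (fC_strictMono C)
    show (((Finset.image (fC C) Finset.univ).orderEmbOfFin _ v : Fin (n + m)) : ℕ)
        - (v : ℕ) = C.1 v
    rw [← hemb]
    show C.1 v + (v : ℕ) - (v : ℕ) = C.1 v
    omega
  right_inv S := by
    apply Subtype.ext
    show Finset.image (fC (gC n m S)) Finset.univ = S.1
    have hsm := (S.1.orderEmbOfFin S.2).strictMono
    have hf : ∀ v : Fin n, fC (gC n m S) v = S.1.orderEmbOfFin S.2 v := by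
      intro v
      apply Fin.ext
      show (((S.1.orderEmbOfFin S.2 v : Fin (n + m)) : ℕ) - (v : ℕ)) + (v : ℕ)
          = ((S.1.orderEmbOfFin S.2 v : Fin (n + m)) : ℕ)
      have h1 := strictMono_le_apply hsm v
      omega
    rw [Finset.image_congr (fun v _ => hf v)]
    apply Finset.coe_injective
    rw [Finset.coe_image, Finset.coe_univ, Set.image_univ]
    exact Finset.range_orderEmbOfFin S.1 S.2

theorem card_monoSet (n m : ℕ) : Nat.card (MonoSet n m) = (n + m).choose n := by
  rw [Nat.card_congr (monoEquiv n m), Nat.card_eq_fintype_card,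
    Fintype.card_finset_len, Fintype.card_fin]

theorem card_compat (T : StdTableau Λ) (k : ℕ) :
    Nat.card (Compat T k)
      = if T.desCount ≤ k then (n + (k - T.desCount)).choose n else 0 := by
  by_cases hd : T.desCount ≤ k
  · rw [if_pos hd, Nat.card_congr (compatEquiv T k hd), card_monoSet]
  · rw [if_neg hd]
    have : IsEmpty (Compat T k) := ⟨fun B => hd (desCount_le_of_compat T k B)⟩
    exact Nat.card_of_isEmpty

end MPAux

/-- For every `r`-multipartition `Λ` of `n`,
`s_k(Λ) = ∑_{j=0}^{k} C(n+j, j) · m_{k-j}(Λ)`. -/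
theorem sCount_eq_sum_choose_mul_mCount {r n : ℕ} (Λ : MultiPartition r n)
    (k : ℕ) :
    sCount Λ k = ∑ j ∈ Finset.range (k + 1),
      (n + j).choose j * mCount Λ (k - j) := by
  classical
  have h0 : sCount Λ k = Nat.card (Σ T : StdTableau Λ, MPAux.Compat T k) := by
    unfold sCount
    exact (Nat.card_eq_of_bijective _ (MPAux.unStd_bijective Λ k)).symm
  rw [h0, Nat.card_eq_fintype_card, Fintype.card_sigma]
  have h2 : ∀ T : StdTableau Λ, Fintype.card (MPAux.Compat T k)
      = ∑ j ∈ Finset.range (k + 1),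
          if T.desCount = k - j then (n + j).choose j else 0 := by
    intro T
    rw [← Nat.card_eq_fintype_card, MPAux.card_compat]
    by_cases hd : T.desCount ≤ k
    · rw [if_pos hd]
      have hsum := Finset.sum_eq_single (s := Finset.range (k + 1))
        (f := fun j => if T.desCount = k - j then (n + j).choose j else 0)
        (k - T.desCount)
        (fun j hj hne => by
          beta_reduce
          rw [if_neg]
          have := Finset.mem_range.1 hj
          omega)
        (fun hmem => absurd (Finset.mem_range.2 (by omega)) hmem)
      rw [hsum]
      beta_reduce
      rw [if_pos (by omega)]
      have hsym := Nat.choose_symm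
        (n := n + (k - T.desCount)) (k := k - T.desCount) (by omega)
      rw [Nat.add_sub_cancel] at hsym
      exact hsym
    · rw [if_neg hd]
      symm
      apply Finset.sum_eq_zero
      intro j hj
      rw [if_neg]
      have := Finset.mem_range.1 hj
      omega
  rw [Finset.sum_congr rfl fun T _ => h2 T, Finset.sum_comm]
  refine Finset.sum_congr rfl fun j hj => ?_
  rw [Finset.sum_ite, Finset.sum_const, Finset.sum_const_zero, add_zero,
    smul_eq_mul]
  have hm : mCount Λ (k - j)
      = (Finset.univ.filter fun T : StdTableau Λ => T.desCount = k - j).card := by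
    unfold mCount
    rw [Nat.card_eq_fintype_card, Fintype.card_subtype]
  rw [hm, mul_comm]
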